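/- As z → 1 within the slit plane, κ₀(z) = 1 + h(z)√(1−z) where h(z) → −√2/π, i.e., lim_{z→1} (κ₀(z) − 1)/√(1−z) = −√2/π. -/

import Mathlib

open Real Complex Filter
open scoped Topology

/-- The slit plane `ℂ \ [1,∞) \ (−∞,−1]`. -/
def Dslit : Set ℂ := {z : ℂ | ¬(z.im = 0 ∧ (1 ≤ z.re ∨ z.re ≤ -1))}

/-- Analytic extension of the degree-0 arc-cosine kernel to the slit plane. -/
noncomputable def K0C (z : ℂ) : ℂ :=
  ((Real.pi : ℂ) + Complex.I * Complex.log (z + Complex.I * ((1 - z ^ 2) ^ ((1 : ℂ) / 2))))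
    / (Real.pi : ℂ)

/-- Auxiliary: `u z = z + i √(1-z²)`. -/
noncomputable def uu (z : ℂ) : ℂ := z + Complex.I * ((1 - z ^ 2) ^ ((1 : ℂ) / 2))

lemma sq_half (x : ℂ) : (x ^ ((1 : ℂ) / 2)) ^ 2 = x := by
  have h := Complex.cpow_ofNat_inv_pow x 2
  rw [one_div]
  exact_mod_cast h

lemma one_ne_mem {z : ℂ} (hz : z ∈ Dslit) : z ≠ 1 := by
  rintro rfl
  exact hz ⟨rfl, Or.inl le_rfl⟩

lemma re_pos_of_close {z : ℂ} (hd : ‖z - 1‖ < 1) : 0 < z.re := by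
  have h1 : |(z - 1).re| ≤ ‖z - 1‖ := Complex.abs_re_le_norm _
  have : |z.re - 1| < 1 := by
    simpa [Complex.sub_re] using lt_of_le_of_lt h1 hd
  have := abs_lt.mp this
  linarith [this.1]

lemma sqrt_split {z : ℂ} (hz : z ∈ Dslit) (hd : ‖z - 1‖ < 1) :
    (1 - z ^ 2) ^ ((1 : ℂ) / 2) = (1 - z) ^ ((1 : ℂ) / 2) * (1 + z) ^ ((1 : ℂ) / 2) := by
  have hre : 0 < z.re := re_pos_of_close hd
  have hx : (1 : ℂ) - z ≠ 0 := sub_ne_zero.mpr (Ne.symm (one_ne_mem hz))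
  have hy : (1 : ℂ) + z ≠ 0 := by
    intro h
    have : (1 + z).re = 0 := by rw [h]; simp
    rw [Complex.add_re, Complex.one_re] at this
    linarith
  have harg : Complex.arg (1 - z) + Complex.arg (1 + z) ∈ Set.Ioc (-Real.pi) Real.pi := by
    have himx : (1 - z).im = -z.im := by simp [Complex.sub_im]
    have himy : (1 + z).im = z.im := by simp [Complex.add_im]
    rcases lt_trichotomy z.im 0 with him | him | him
    · -- im z < 0 : arg(1-z) ≥ 0, arg(1+z) < 0
      have h1 : 0 ≤ Complex.arg (1 - z) := Complex.arg_nonneg_iff.mpr (by rw [himx]; linarith)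
      have h2 : Complex.arg (1 + z) < 0 := Complex.arg_neg_iff.mpr (by rw [himy]; exact him)
      have h3 := Complex.arg_le_pi (1 - z)
      have h4 := Complex.neg_pi_lt_arg (1 + z)
      constructor <;> linarith
    · -- im z = 0 : both args are 0
      have hlt : z.re < 1 := by
        by_contra hcon
        exact hz ⟨him, Or.inl (le_of_not_gt hcon)⟩
      have h1 : Complex.arg (1 - z) = 0 := Complex.arg_eq_zero_iff.mpr
        ⟨by rw [Complex.sub_re, Complex.one_re]; linarith, by rw [himx, him, neg_zero]⟩
      have h2 : Complex.arg (1 + z) = 0 := Complex.arg_eq_zero_iff.mpr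
        ⟨by rw [Complex.add_re, Complex.one_re]; linarith, by rw [himy, him]⟩
      rw [h1, h2]
      constructor <;> [linarith [Real.pi_pos]; linarith [Real.pi_pos]]
    · -- im z > 0 : arg(1-z) < 0, arg(1+z) ≥ 0
      have h1 : Complex.arg (1 - z) < 0 := Complex.arg_neg_iff.mpr (by rw [himx]; linarith)
      have h2 : 0 ≤ Complex.arg (1 + z) := Complex.arg_nonneg_iff.mpr (by rw [himy]; linarith)
      have h3 := Complex.neg_pi_lt_arg (1 - z)
      have h4 := Complex.arg_le_pi (1 + z)
      constructor <;> linarith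
  have hlog : Complex.log ((1 - z) * (1 + z)) = Complex.log (1 - z) + Complex.log (1 + z) :=
    Complex.log_mul hx hy harg
  have h2 : (1 : ℂ) - z ^ 2 = (1 - z) * (1 + z) := by ring
  rw [h2, Complex.cpow_def_of_ne_zero (mul_ne_zero hx hy),
    Complex.cpow_def_of_ne_zero hx, Complex.cpow_def_of_ne_zero hy, hlog, add_mul,
    Complex.exp_add]

theorem k0_expansion_at_one :
    Tendsto (fun z : ℂ => (K0C z - 1) / ((1 - z) ^ ((1 : ℂ) / 2)))
      (nhdsWithin 1 Dslit)
      (nhds ((-(Real.sqrt 2 / Real.pi) : ℝ) : ℂ)) := by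
  have hpi : (Real.pi : ℂ) ≠ 0 := by exact_mod_cast Real.pi_ne_zero
  have hmem : ∀ᶠ z in 𝓝[Dslit] (1 : ℂ), z ∈ Dslit := eventually_mem_nhdsWithin
  have hball : ∀ᶠ z in 𝓝[Dslit] (1 : ℂ), ‖z - 1‖ < 1 := by
    have h : ∀ᶠ z in 𝓝 (1 : ℂ), ‖z - 1‖ < 1 := by
      filter_upwards [Metric.ball_mem_nhds (1 : ℂ) one_pos] with z hzz
      simpa [dist_eq_norm] using hzz
    exact h.filter_mono nhdsWithin_le_nhds
  -- continuity of sqrt at 0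
  have hc0 : ContinuousAt (fun w : ℂ => w ^ ((1 : ℂ) / 2)) 0 :=
    Complex.continuousAt_cpow_const_of_re_pos (Or.inl le_rfl) (by norm_num)
  -- u tends to 1
  have hsub : Tendsto (fun z : ℂ => 1 - z ^ 2) (𝓝[Dslit] (1 : ℂ)) (𝓝 0) := by
    have h : ContinuousAt (fun z : ℂ => 1 - z ^ 2) 1 := by fun_prop
    have := h.continuousWithinAt (s := Dslit)
    simpa using this.tendsto
  have hsqrt0 : Tendsto (fun z : ℂ => (1 - z ^ 2) ^ ((1 : ℂ) / 2)) (𝓝[Dslit] (1 : ℂ)) (𝓝 0) := by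
    have h := hc0.tendsto.comp hsub
    simpa [Function.comp_def, Complex.zero_cpow (by norm_num : ((1 : ℂ) / 2) ≠ 0)] using h
  have hu1 : Tendsto uu (𝓝[Dslit] (1 : ℂ)) (𝓝 1) := by
    have hid : Tendsto (fun z : ℂ => z) (𝓝[Dslit] (1 : ℂ)) (𝓝 1) :=
      (continuous_id.tendsto 1).mono_left nhdsWithin_le_nhds
    have h := hid.add (tendsto_const_nhds (x := Complex.I).mul hsqrt0)
    rw [mul_zero, add_zero] at h
    exact h
  have hune : ∀ᶠ z in 𝓝[Dslit] (1 : ℂ), uu z ≠ 1 := by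
    filter_upwards [hmem] with z hz hcon
    apply one_ne_mem hz
    have hs : ((1 - z ^ 2) ^ ((1 : ℂ) / 2)) ^ 2 = 1 - z ^ 2 := sq_half _
    have h1 : Complex.I * ((1 - z ^ 2) ^ ((1 : ℂ) / 2)) = 1 - z := by
      rw [uu] at hcon; linear_combination hcon
    have h2 : (Complex.I * ((1 - z ^ 2) ^ ((1 : ℂ) / 2))) ^ 2 = (1 - z) ^ 2 := by rw [h1]
    have h3 : -(1 - z ^ 2) = (1 - z) ^ 2 := by
      rw [← h2, mul_pow, Complex.I_sq, hs]; ring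
    linear_combination (1 / 2 : ℂ) * h3
  have hu : Tendsto uu (𝓝[Dslit] (1 : ℂ)) (𝓝[≠] (1 : ℂ)) := by
    rw [tendsto_nhdsWithin_iff]
    exact ⟨hu1, hune⟩
  -- slope of log at 1
  have hslope : Tendsto (fun z : ℂ => Complex.log (uu z) / (uu z - 1)) (𝓝[Dslit] (1 : ℂ))
      (𝓝 1) := by
    have hmem1 : (1 : ℂ) ∈ Complex.slitPlane := by simp [Complex.mem_slitPlane_iff]
    have hd : HasDerivAt Complex.log 1 (1 : ℂ) := by
      simpa using Complex.hasDerivAt_log hmem1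
    have h := (hasDerivAt_iff_tendsto_slope.mp hd).comp hu
    refine h.congr fun z => ?_
    simp [Function.comp, slope_def_field, Complex.log_one]
  -- the second factor
  have hB : Tendsto (fun z : ℂ => (uu z - 1) / ((1 - z) ^ ((1 : ℂ) / 2)))
      (𝓝[Dslit] (1 : ℂ)) (𝓝 (Complex.I * (Real.sqrt 2 : ℂ))) := by
    have heq : ∀ᶠ z in 𝓝[Dslit] (1 : ℂ),
        -((1 - z) ^ ((1 : ℂ) / 2)) + Complex.I * ((1 + z) ^ ((1 : ℂ) / 2)) =
          (uu z - 1) / ((1 - z) ^ ((1 : ℂ) / 2)) := by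
      filter_upwards [hmem, hball] with z hz hb
      have hx : (1 : ℂ) - z ≠ 0 := sub_ne_zero.mpr (Ne.symm (one_ne_mem hz))
      have hsne : (1 - z) ^ ((1 : ℂ) / 2) ≠ 0 := by
        simp [Complex.cpow_eq_zero_iff, hx]
      have ha2 : ((1 - z) ^ ((1 : ℂ) / 2)) ^ 2 = 1 - z := sq_half _
      rw [eq_div_iff hsne, uu, sqrt_split hz hb]
      linear_combination -ha2
    have h1 : Tendsto (fun z : ℂ => -((1 - z) ^ ((1 : ℂ) / 2))) (𝓝[Dslit] (1 : ℂ)) (𝓝 0) := by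
      have hsub1 : Tendsto (fun z : ℂ => 1 - z) (𝓝[Dslit] (1 : ℂ)) (𝓝 0) := by
        have h : ContinuousAt (fun z : ℂ => 1 - z) 1 := by fun_prop
        have := h.continuousWithinAt (s := Dslit)
        simpa using this.tendsto
      have h := (hc0.tendsto.comp hsub1).neg
      simpa [Complex.zero_cpow (by norm_num : ((1 : ℂ) / 2) ≠ 0)] using h
    have h2 : Tendsto (fun z : ℂ => Complex.I * ((1 + z) ^ ((1 : ℂ) / 2)))
        (𝓝[Dslit] (1 : ℂ)) (𝓝 (Complex.I * (Real.sqrt 2 : ℂ))) := by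
      have hadd : Tendsto (fun z : ℂ => 1 + z) (𝓝[Dslit] (1 : ℂ)) (𝓝 2) := by
        have h : ContinuousAt (fun z : ℂ => 1 + z) 1 := by fun_prop
        have := h.continuousWithinAt (s := Dslit)
        have h2 := this.tendsto
        norm_num at h2
        exact h2
      have hmem2 : (2 : ℂ) ∈ Complex.slitPlane := by simp [Complex.mem_slitPlane_iff]
      have hc2 : ContinuousAt (fun w : ℂ => w ^ ((1 : ℂ) / 2)) 2 :=
        continuousAt_cpow_const hmem2
      have hval : ((2 : ℂ)) ^ ((1 : ℂ) / 2) = (Real.sqrt 2 : ℂ) := by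
        rw [show ((1 : ℂ) / 2) = (((1 / 2 : ℝ)) : ℂ) by norm_num,
          show ((2 : ℂ)) = ((2 : ℝ) : ℂ) by norm_num,
          ← Complex.ofReal_cpow (by norm_num : (0 : ℝ) ≤ 2),
          Real.sqrt_eq_rpow]
      have h := (hc2.tendsto.comp hadd).const_mul Complex.I
      rw [hval] at h
      exact h
    have hsum := h1.add h2
    rw [zero_add] at hsum
    exact hsum.congr' heq
  -- combine
  have hfinal := ((tendsto_const_nhds (x := Complex.I / (Real.pi : ℂ))).mul hslope).mul hB
  have hg : ∀ᶠ z in 𝓝[Dslit] (1 : ℂ),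
      (Complex.I / (Real.pi : ℂ) * (Complex.log (uu z) / (uu z - 1))) *
        ((uu z - 1) / ((1 - z) ^ ((1 : ℂ) / 2))) =
      (K0C z - 1) / ((1 - z) ^ ((1 : ℂ) / 2)) := by
    filter_upwards [hune] with z hne
    have h1 : uu z - 1 ≠ 0 := sub_ne_zero.mpr hne
    have hK : K0C z - 1 = Complex.I * Complex.log (uu z) / (Real.pi : ℂ) := by
      rw [K0C, uu]
      field_simp
      ring
    rw [hK]
    rcases eq_or_ne ((1 - z) ^ ((1 : ℂ) / 2)) 0 with hs | hs
    · rw [hs]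
      simp
    · field_simp
  have hval : (Complex.I / (Real.pi : ℂ) * 1) * (Complex.I * (Real.sqrt 2 : ℂ)) =
      ((-(Real.sqrt 2 / Real.pi) : ℝ) : ℂ) := by
    push_cast
    field_simp
    linear_combination Complex.I_sq
  rw [hval] at hfinal
  exact hfinal.congr' hg
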